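/- Let A be a positive semi-definite Hermitian n×n complex matrix. Then ρ_per(A) + η_per(A) = n, where ρ_per is the permanental rank and η_per is the multiplicity of 0 as a root of the permanental polynomial per(A − xI). -/

import Mathlib

open scoped ComplexOrder

/-- The permanent of a (possibly rectangular) matrix whose rows and columns are indexed by
finite types: the sum over all bijections `e : ι ≃ κ` of `∏ i, M i (e i)`.
For a square matrix this is the usual permanent `∑_{σ ∈ S_n} ∏_{i} M i (σ i)`. -/
noncomputable def Matrix.per {ι κ R : Type*} [Fintype ι] [Fintype κ] [DecidableEq ι]
    [DecidableEq κ] [CommSemiring R] (M : Matrix ι κ R) : R :=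
  ∑ e : ι ≃ κ, ∏ i, M i (e i)

/-- The permanental rank `ρ_per(A)` of an `n × n` matrix: the largest `k` such that some
`k × k` submatrix (rows chosen by an injection `f`, columns by an injection `g`) has
nonzero permanent. -/
noncomputable def permRank {n : ℕ} {R : Type*} [CommSemiring R]
    (A : Matrix (Fin n) (Fin n) R) : ℕ :=
  sSup {k | ∃ f g : Fin k → Fin n, Function.Injective f ∧ Function.Injective g ∧
    (A.submatrix f g).per ≠ 0}

/-- The permanental polynomial `π(A, x) = per(A - x I)`. -/
noncomputable def permPoly {n : ℕ} {R : Type*} [CommRing R]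
    (A : Matrix (Fin n) (Fin n) R) : Polynomial R :=
  (A.map Polynomial.C - (Polynomial.X : Polynomial R) • (1 : Matrix (Fin n) (Fin n) (Polynomial R))).per

/-- The permanental nullity `η_per(A)`: the multiplicity of `0` as a root of the
permanental polynomial. -/
noncomputable def permNullity {n : ℕ} {R : Type*} [CommRing R]
    (A : Matrix (Fin n) (Fin n) R) : ℕ :=
  (permPoly A).rootMultiplicity 0

open Finset Polynomial ComplexConjugate Matrix

lemma per_submatrix_equiv {ι κ ι' κ' R : Type*} [Fintype ι] [Fintype κ] [Fintype ι'] [Fintype κ']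
    [DecidableEq ι] [DecidableEq κ] [DecidableEq ι'] [DecidableEq κ'] [CommSemiring R]
    (M : Matrix ι κ R) (e₁ : ι' ≃ ι) (e₂ : κ' ≃ κ) :
    (M.submatrix e₁ e₂).per = M.per := by
  unfold Matrix.per
  refine Fintype.sum_equiv (e₁.equivCongr e₂) _ _ fun e => ?_
  rw [← Equiv.prod_comp e₁ fun i => M i ((e₁.equivCongr e₂ e) i)]
  simp [Equiv.equivCongr]

lemma per_isEmpty {ι κ R : Type*} [Fintype ι] [Fintype κ] [DecidableEq ι] [DecidableEq κ]
    [IsEmpty ι] [IsEmpty κ] [CommSemiring R] (M : Matrix ι κ R) : M.per = 1 := by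
  haveI : Unique (ι ≃ κ) := ⟨⟨Equiv.equivOfIsEmpty ι κ⟩, fun e => by ext i; exact isEmptyElim i⟩
  unfold Matrix.per
  rw [Fintype.sum_unique]
  exact Finset.prod_of_isEmpty _

lemma per_map {ι κ R S : Type*} [Fintype ι] [Fintype κ] [DecidableEq ι] [DecidableEq κ]
    [CommSemiring R] [CommSemiring S] (M : Matrix ι κ R) (f : R →+* S) :
    (M.map f).per = f M.per := by
  unfold Matrix.per
  simp [map_sum, map_prod, Matrix.map_apply]

noncomputable def wvec {n : ℕ} {ι : Type*} [Fintype ι] [DecidableEq ι]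
    (B : Matrix (Fin n) (Fin n) ℂ) (f : ι → Fin n) (l : ι → Fin n) : ℂ :=
  ∑ σ : Equiv.Perm ι, ∏ i, B (l i) (f (σ i))

lemma gram {n : ℕ} {ι : Type*} [Fintype ι] [DecidableEq ι] (B : Matrix (Fin n) (Fin n) ℂ)
    (f g : ι → Fin n) :
    ∑ l : ι → Fin n, conj (wvec B f l) * wvec B g l
      = (Nat.factorial (Fintype.card ι) : ℂ) * ((Bᴴ * B).submatrix f g).per := by
  have h1 : ∀ l : ι → Fin n, conj (wvec B f l) * wvec B g l
      = ∑ τ : Equiv.Perm ι, ∑ σ : Equiv.Perm ι,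
          ∏ i, conj (B (l i) (f (τ i))) * B (l i) (g (σ i)) := by
    intro l
    rw [wvec, wvec, map_sum, Finset.sum_mul_sum]
    refine Finset.sum_congr rfl fun τ _ => Finset.sum_congr rfl fun σ _ => ?_
    rw [map_prod, ← Finset.prod_mul_distrib]
  simp_rw [h1]
  rw [Finset.sum_comm]
  conv_lhs => rw [show (fun τ : Equiv.Perm ι => ∑ l : ι → Fin n, ∑ σ : Equiv.Perm ι,
      ∏ i, conj (B (l i) (f (τ i))) * B (l i) (g (σ i))) = fun τ => ∑ σ : Equiv.Perm ι,
      ∑ l : ι → Fin n, ∏ i, conj (B (l i) (f (τ i))) * B (l i) (g (σ i))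
      from funext fun τ => Finset.sum_comm]
  have h2 : ∀ τ : Equiv.Perm ι, ∀ σ : Equiv.Perm ι,
      ∑ l : ι → Fin n, ∏ i, conj (B (l i) (f (τ i))) * B (l i) (g (σ i))
        = ∏ i, (Bᴴ * B) (f (τ i)) (g (σ i)) := by
    intro τ σ
    have h : ∀ i, (Bᴴ * B) (f (τ i)) (g (σ i)) = ∑ m, conj (B m (f (τ i))) * B m (g (σ i)) := by
      intro i; simp [Matrix.mul_apply, Matrix.conjTranspose_apply]
    simp_rw [h]
    rw [Fintype.prod_sum]
  simp_rw [h2]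
  have h3 : ∀ τ : Equiv.Perm ι,
      ∑ σ : Equiv.Perm ι, ∏ i, (Bᴴ * B) (f (τ i)) (g (σ i)) = ((Bᴴ * B).submatrix f g).per := by
    intro τ
    unfold Matrix.per
    rw [← Equiv.sum_comp (Equiv.mulRight τ) fun σ : Equiv.Perm ι =>
      ∏ i, (Bᴴ * B) (f (τ i)) (g (σ i))]
    refine Fintype.sum_congr _ _ fun ρ => ?_
    rw [← Equiv.prod_comp τ fun j => ((Bᴴ * B).submatrix f g) j (ρ j)]
    simp [Matrix.submatrix_apply]
  simp_rw [h3]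
  rw [Finset.sum_const]
  simp [Fintype.card_perm, mul_comm]

lemma gram_self {n : ℕ} {ι : Type*} [Fintype ι] [DecidableEq ι] (B : Matrix (Fin n) (Fin n) ℂ)
    (f : ι → Fin n) :
    (Nat.factorial (Fintype.card ι) : ℂ) * ((Bᴴ * B).submatrix f f).per
      = ((∑ l : ι → Fin n, Complex.normSq (wvec B f l) : ℝ) : ℂ) := by
  rw [← gram B f f]
  push_cast
  refine Finset.sum_congr rfl fun l _ => ?_
  rw [← Complex.normSq_eq_conj_mul_self]

lemma per_self_nonneg {n : ℕ} {ι : Type*} [Fintype ι] [DecidableEq ι]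
    (B : Matrix (Fin n) (Fin n) ℂ) (f : ι → Fin n) :
    0 ≤ ((Bᴴ * B).submatrix f f).per := by
  have hfac : ((Nat.factorial (Fintype.card ι) : ℝ)) ≠ 0 := by
    exact_mod_cast (Nat.factorial_pos _).ne'
  have h := gram_self B f
  have : ((Bᴴ * B).submatrix f f).per
      = (((∑ l : ι → Fin n, Complex.normSq (wvec B f l)) / (Nat.factorial (Fintype.card ι)) : ℝ) : ℂ) := by
    rw [Complex.ofReal_div]
    field_simp
    rw [mul_comm] at h
    push_cast at h ⊢
    exact h
  rw [this]
  rw [Complex.zero_le_real]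
  exact div_nonneg (Finset.sum_nonneg fun _ _ => Complex.normSq_nonneg _) (Nat.cast_nonneg _)

lemma per_diag_ne_zero {n : ℕ} {ι : Type*} [Fintype ι] [DecidableEq ι]
    (B : Matrix (Fin n) (Fin n) ℂ) (f g : ι → Fin n)
    (h : ((Bᴴ * B).submatrix f g).per ≠ 0) :
    ((Bᴴ * B).submatrix f f).per ≠ 0 := by
  have hfac : ((Nat.factorial (Fintype.card ι) : ℂ)) ≠ 0 := by
    exact_mod_cast (Nat.factorial_pos _).ne'
  have hsum : ∑ l : ι → Fin n, conj (wvec B f l) * wvec B g l ≠ 0 := by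
    rw [gram B f g]
    exact mul_ne_zero hfac h
  obtain ⟨l, _, hl⟩ := Finset.exists_ne_zero_of_sum_ne_zero hsum
  have hwf : wvec B f l ≠ 0 := by
    intro h0
    apply hl
    rw [h0, map_zero, zero_mul]
  have hpos : 0 < ∑ l : ι → Fin n, Complex.normSq (wvec B f l) := by
    refine Finset.sum_pos' (fun _ _ => Complex.normSq_nonneg _) ⟨l, Finset.mem_univ l, ?_⟩
    exact Complex.normSq_pos.mpr hwf
  intro h0
  have := gram_self B f
  rw [h0, mul_zero] at this
  exact absurd this.symm (by exact_mod_cast hpos.ne')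


noncomputable def pper {n : ℕ} (A : Matrix (Fin n) (Fin n) ℂ) (S : Finset (Fin n)) : ℂ :=
  (A.submatrix (fun i : {x // x ∈ S} => (i : Fin n)) (fun i : {x // x ∈ S} => (i : Fin n))).per

lemma prod_ite_zero' {α M : Type*} [CommMonoidWithZero M] (s : Finset α) (p : α → Prop)
    [DecidablePred p] (c : M) :
    (∏ i ∈ s, if p i then c else 0) = if ∀ i ∈ s, p i then c ^ s.card else 0 := by
  by_cases h : ∀ i ∈ s, p i
  · rw [if_pos h, Finset.prod_congr rfl (fun i hi => if_pos (h i hi)), Finset.prod_const]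
  · rw [if_neg h]
    push_neg at h
    obtain ⟨i, hi, hpi⟩ := h
    exact Finset.prod_eq_zero hi (if_neg hpi)

lemma sum_perm_fixing {n : ℕ} (t : Finset (Fin n)) (F : Fin n → Fin n → Polynomial ℂ) :
    ∑ e ∈ Finset.univ.filter (fun e : Equiv.Perm (Fin n) => ∀ i ∈ tᶜ, i = e i),
        ∏ i ∈ t, F i (e i)
      = ∑ π : Equiv.Perm {x // x ∈ t}, ∏ i : {x // x ∈ t}, F i.1 (π i).1 := by
  have hmem : ∀ e : Equiv.Perm (Fin n), (∀ i ∈ tᶜ, i = e i) →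
      ∀ x : Fin n, x ∈ t ↔ e x ∈ t := by
    intro e he x
    have hfix : ∀ i, i ∉ t → e i = i := fun i hi => (he i (Finset.mem_compl.mpr hi)).symm
    constructor
    · intro hx
      by_contra h
      have h2 : e x = x := e.injective (hfix _ h)
      rw [h2] at h; exact h hx
    · intro hx
      by_contra h
      rw [hfix x h] at hx; exact h hx
  refine Finset.sum_bij'
    (fun e he => Equiv.Perm.subtypePerm e (fun x => (hmem e (Finset.mem_filter.mp he).2 x).symm))
    (fun π _ => Equiv.Perm.ofSubtype π) (fun _ _ => Finset.mem_univ _) ?_ ?_ ?_ ?_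
  · intro π _
    refine Finset.mem_filter.mpr ⟨Finset.mem_univ _, fun i hi => ?_⟩
    exact (Equiv.Perm.ofSubtype_apply_of_not_mem π (Finset.mem_compl.mp hi)).symm
  · intro e he
    refine Equiv.Perm.ofSubtype_subtypePerm _ fun x hx => ?_
    by_contra hxt
    exact hx (((Finset.mem_filter.mp he).2 x (Finset.mem_compl.mpr hxt)).symm)
  · intro π _
    exact Equiv.Perm.subtypePerm_ofSubtype π
  · intro e he
    rw [← Finset.prod_attach t (fun i => F i (e i)), Finset.univ_eq_attach]
    exact Finset.prod_congr rfl fun i _ => rfl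

lemma permPoly_eq {n : ℕ} (A : Matrix (Fin n) (Fin n) ℂ) :
    permPoly A = ∑ S : Finset (Fin n),
      Polynomial.C (pper A S) * (-Polynomial.X : Polynomial ℂ) ^ (n - S.card) := by
  unfold permPoly Matrix.per
  have hentry : ∀ (e : Fin n ≃ Fin n) (i : Fin n),
      (A.map C - (X : Polynomial ℂ) • 1) i (e i)
        = C (A i (e i)) + (if i = e i then -X else 0) := by
    intro e i
    rw [Matrix.sub_apply, Matrix.map_apply, Matrix.smul_apply, Matrix.one_apply]
    split_ifs with h <;> simp [sub_eq_add_neg]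
  calc ∑ e : Fin n ≃ Fin n, ∏ i, (A.map C - (X : Polynomial ℂ) • 1) i (e i)
      = ∑ e : Fin n ≃ Fin n, ∑ t : Finset (Fin n),
          (∏ i ∈ t, C (A i (e i))) * ∏ i ∈ tᶜ, (if i = e i then (-X : Polynomial ℂ) else 0) := by
        refine Finset.sum_congr rfl fun e _ => ?_
        simp_rw [hentry e]
        rw [Fintype.prod_add]
    _ = ∑ t : Finset (Fin n), ∑ e : Fin n ≃ Fin n,
          (∏ i ∈ t, C (A i (e i))) * ∏ i ∈ tᶜ, (if i = e i then (-X : Polynomial ℂ) else 0) :=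
        Finset.sum_comm
    _ = ∑ t : Finset (Fin n),
          C (pper A t) * (-X : Polynomial ℂ) ^ (n - t.card) := by
        refine Finset.sum_congr rfl fun t _ => ?_
        have hc : tᶜ.card = n - t.card := by
          rw [Finset.card_compl, Fintype.card_fin]
        have hprod : ∀ e : Fin n ≃ Fin n,
            (∏ i ∈ tᶜ, if i = e i then (-X : Polynomial ℂ) else 0)
            = if ∀ i ∈ tᶜ, i = e i then (-X : Polynomial ℂ) ^ (n - t.card) else 0 := by
          intro e
          rw [prod_ite_zero' tᶜ (fun i => i = e i) (-X : Polynomial ℂ), hc]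
          congr
        simp_rw [hprod, mul_ite, mul_zero, ← Finset.sum_filter]
        rw [← Finset.sum_mul, sum_perm_fixing t (fun i j => C (A i j))]
        congr 1
        unfold pper Matrix.per
        rw [map_sum]
        refine Finset.sum_congr rfl fun π _ => ?_
        rw [map_prod]
        rfl

lemma permPoly_coeff {n : ℕ} (A : Matrix (Fin n) (Fin n) ℂ) (k : ℕ) (hk : k ≤ n) :
    (permPoly A).coeff (n - k)
      = (-1 : ℂ) ^ (n - k) *
        ∑ S ∈ Finset.univ.filter (fun S : Finset (Fin n) => S.card = k), pper A S := by
  rw [permPoly_eq, Polynomial.finset_sum_coeff]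
  have hterm : ∀ S : Finset (Fin n),
      (Polynomial.C (pper A S) * (-X : Polynomial ℂ) ^ (n - S.card)).coeff (n - k)
      = if S.card = k then (-1 : ℂ) ^ (n - k) * pper A S else 0 := by
    intro S
    have hS : S.card ≤ n := by simpa using Finset.card_le_univ S
    have hXpow : (-X : Polynomial ℂ) ^ (n - S.card)
        = Polynomial.C ((-1 : ℂ) ^ (n - S.card)) * X ^ (n - S.card) := by
      rw [neg_pow, map_pow, Polynomial.C_neg, Polynomial.C_1]
    rw [hXpow, ← mul_assoc, ← Polynomial.C_mul, Polynomial.coeff_C_mul, Polynomial.coeff_X_pow]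
    by_cases h : S.card = k
    · rw [if_pos h, h, if_pos rfl, mul_one, mul_comm]
    · rw [if_neg h, if_neg (by omega), mul_zero]
  simp_rw [hterm]
  rw [← Finset.sum_filter, Finset.mul_sum]

lemma pper_empty {n : ℕ} (A : Matrix (Fin n) (Fin n) ℂ) : pper A ∅ = 1 := by
  haveI : IsEmpty {x : Fin n // x ∈ (∅ : Finset (Fin n))} :=
    ⟨fun x => absurd x.2 (Finset.notMem_empty _)⟩
  exact per_isEmpty _

lemma pper_eq_per {n : ℕ} (A : Matrix (Fin n) (Fin n) ℂ) {k : ℕ} (f : Fin k → Fin n)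
    (hf : Function.Injective f) :
    pper A (Finset.univ.image f) = (A.submatrix f f).per := by
  set S := Finset.univ.image f with hSdef
  have hb : Function.Bijective (fun i : Fin k =>
      (⟨f i, by simp [hSdef]⟩ : {x // x ∈ S})) := by
    constructor
    · intro a b h
      exact hf (congrArg Subtype.val h)
    · rintro ⟨x, hx⟩
      obtain ⟨i, _, rfl⟩ := Finset.mem_image.mp hx
      exact ⟨i, rfl⟩
  let e := Equiv.ofBijective _ hb
  have heq : A.submatrix f f = (A.submatrix
      (fun i : {x // x ∈ S} => (i : Fin n)) (fun i : {x // x ∈ S} => (i : Fin n))).submatrix (⇑e) (⇑e) := by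
    ext i j
    rfl
  rw [heq]
  exact (per_submatrix_equiv
    (A.submatrix (fun i : {x // x ∈ S} => (i : Fin n)) (fun i : {x // x ∈ S} => (i : Fin n))) e e).symm

lemma pper_via_equivFin {n : ℕ} (A : Matrix (Fin n) (Fin n) ℂ) (S : Finset (Fin n)) :
    ∃ f : Fin S.card → Fin n, Function.Injective f ∧ (A.submatrix f f).per = pper A S := by
  let e := S.equivFin.symm
  refine ⟨fun i => ((e i : {x // x ∈ S}) : Fin n), ?_, ?_⟩
  · intro a b h
    exact e.injective (Subtype.coe_injective h)
  · have heq : A.submatrix (fun i => ((e i : {x // x ∈ S}) : Fin n))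
        (fun i => ((e i : {x // x ∈ S}) : Fin n))
        = (A.submatrix (fun i : {x // x ∈ S} => (i : Fin n)) (fun i : {x // x ∈ S} => (i : Fin n))).submatrix (⇑e) (⇑e) :=
      rfl
    rw [heq]
    exact per_submatrix_equiv
      (A.submatrix (fun i : {x // x ∈ S} => (i : Fin n)) (fun i : {x // x ∈ S} => (i : Fin n))) e e

lemma pper_nonneg {n : ℕ} (B : Matrix (Fin n) (Fin n) ℂ) (S : Finset (Fin n)) :
    0 ≤ pper (Bᴴ * B) S :=
  per_self_nonneg B _

/-- For a positive semi-definite Hermitian `n × n` complex matrix `A`,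
`ρ_per(A) + η_per(A) = n`. -/
theorem perm_rank_add_nullity_of_posSemidef_complex {n : ℕ} (A : Matrix (Fin n) (Fin n) ℂ)
    (hherm : A.IsHermitian) (hpsd : A.PosSemidef) :
    permRank A + permNullity A = n := by
  open scoped MatrixOrder Matrix.Norms.L2Operator in
  obtain ⟨B, hB⟩ := CStarAlgebra.nonneg_iff_eq_star_mul_self.mp hpsd.nonneg
  rw [Matrix.star_eq_conjTranspose] at hB
  subst hB
  set A := Bᴴ * B with hA
  -- the set of sizes of principal submatrices with nonzero permanent
  set Kset : Set ℕ := {k | ∃ S : Finset (Fin n), S.card = k ∧ pper A S ≠ 0} with hKset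
  have h0 : 0 ∈ Kset := ⟨∅, Finset.card_empty, by rw [pper_empty]; exact one_ne_zero⟩
  have hbdd : ∀ k ∈ Kset, k ≤ n := by
    rintro k ⟨S, rfl, -⟩
    simpa using Finset.card_le_univ S
  set K := sSup Kset with hK
  have hKmem : K ∈ Kset := Nat.sSup_mem ⟨0, h0⟩ ⟨n, hbdd⟩
  have hKle : K ≤ n := hbdd K hKmem
  have hle : ∀ k ∈ Kset, k ≤ K := fun k hk => le_csSup ⟨n, hbdd⟩ hk
  -- step 1 : permRank A = K
  have hrank : permRank A = K := by
    have hsets : {k | ∃ f g : Fin k → Fin n, Function.Injective f ∧ Function.Injective g ∧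
        (A.submatrix f g).per ≠ 0} = Kset := by
      ext k
      constructor
      · rintro ⟨f, g, hf, hg, hfg⟩
        refine ⟨Finset.univ.image f, ?_, ?_⟩
        · rw [Finset.card_image_of_injective _ hf, Finset.card_univ, Fintype.card_fin]
        · rw [pper_eq_per A f hf]
          exact per_diag_ne_zero B f g hfg
      · rintro ⟨S, rfl, hS⟩
        obtain ⟨f, hf, hfS⟩ := pper_via_equivFin A S
        exact ⟨f, f, hf, hf, by rw [hfS]; exact hS⟩
    rw [permRank, hsets]
  -- the permanental polynomial is nonzero
  have hne : permPoly A ≠ 0 := by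
    intro h
    have := permPoly_coeff A 0 (Nat.zero_le n)
    rw [h, Polynomial.coeff_zero] at this
    have hfil : Finset.univ.filter (fun S : Finset (Fin n) => S.card = 0) = {∅} := by
      ext S
      simp [Finset.card_eq_zero]
    rw [hfil, Finset.sum_singleton, pper_empty, mul_one] at this
    exact pow_ne_zero _ (neg_ne_zero.mpr one_ne_zero) this.symm
  -- step 2 : the trailing degree is n - K
  have htd : (permPoly A).natTrailingDegree = n - K := by
    refine le_antisymm ?_ ?_
    · refine Polynomial.natTrailingDegree_le_of_ne_zero ?_
      rw [permPoly_coeff A K hKle]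
      refine mul_ne_zero (pow_ne_zero _ (neg_ne_zero.mpr one_ne_zero)) ?_
      obtain ⟨S₀, hS₀card, hS₀⟩ := hKmem
      have hpos : 0 < ∑ S ∈ Finset.univ.filter
          (fun S : Finset (Fin n) => S.card = K), pper A S := by
        refine Finset.sum_pos' (fun S _ => pper_nonneg B S) ⟨S₀, ?_, ?_⟩
        · simp [hS₀card]
        · exact lt_of_le_of_ne (pper_nonneg B S₀) (Ne.symm hS₀)
      exact hpos.ne'
    · refine Polynomial.le_natTrailingDegree hne ?_
      intro m hm
      have hk : n - m ≤ n := Nat.sub_le _ _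
      have hmeq : m = n - (n - m) := by omega
      rw [hmeq, permPoly_coeff A (n - m) hk]
      have hzero : ∑ S ∈ Finset.univ.filter
          (fun S : Finset (Fin n) => S.card = n - m), pper A S = 0 := by
        refine Finset.sum_eq_zero fun S hS => ?_
        by_contra hne'
        have : S.card ≤ K := hle _ ⟨S, rfl, hne'⟩
        have : S.card = n - m := (Finset.mem_filter.mp hS).2
        omega
      rw [hzero, mul_zero]
  have hnull : permNullity A = n - K := by
    rw [permNullity, Polynomial.rootMultiplicity_eq_natTrailingDegree', htd]
  rw [hrank, hnull]
  omega
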